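/- Hölder C¹-closeness of inverse branches: given M, α > 0 and c > 0 and l ∈ ℕ, there exists ε > 0 such that for every S ∈ 𝒜(M,ε,α) and the affine map R ∈ 𝒮¹(I₁,…,I_k,L) with R'·S' > 0, the gaps satisfy exp(−c)·|J^R_j(i₁,…,i_r)| ≤ |J^S_j(i₁,…,i_r)| ≤ exp(c)·|J^R_j(i₁,…,i_r)| for all r ≤ l and all 1 ≤ j ≤ k−1. -/

import Mathlib

open MeasureTheory

/-- The composition `φ_{i₁} ∘ ⋯ ∘ φ_{i_r}` of inverse branches along a word. -/
def compBranch {k : ℕ} (φ : Fin k → ℝ → ℝ) : List (Fin k) → ℝ → ℝ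
  | [] => id
  | i :: l => φ i ∘ compBranch φ l

open Set

section Helpers

lemma contOn_of_bound {f : ℝ → ℝ} {T : Set ℝ} {K : ℝ}
    (h : ∀ x ∈ T, ∀ y ∈ T, |f x - f y| ≤ K * |x - y|) : ContinuousOn f T := by
  have hlip : LipschitzOnWith (Real.toNNReal K) f T := by
    rw [lipschitzOnWith_iff_dist_le_mul]
    intro x hx y hy
    rw [Real.dist_eq, Real.dist_eq]
    calc |f x - f y| ≤ K * |x - y| := h x hx y hy
      _ ≤ Real.toNNReal K * |x - y| :=
        mul_le_mul_of_nonneg_right (Real.le_coe_toNNReal K) (abs_nonneg _)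
  exact hlip.continuousOn

lemma image_Icc_of_biLip {f : ℝ → ℝ} {lA lB m K : ℝ} (hK : 0 ≤ K)
    (hmap : ∀ x ∈ Icc lA lB, f x ∈ Icc lA lB)
    (hcont : ContinuousOn f (Icc lA lB))
    (hbd : ∀ x ∈ Icc lA lB, ∀ y ∈ Icc lA lB,
      m * |x - y| ≤ |f x - f y| ∧ |f x - f y| ≤ K * |x - y|)
    {u v : ℝ} (hu : u ∈ Icc lA lB) (hv : v ∈ Icc lA lB) (huv : u ≤ v) :
    ∃ p q, p ≤ q ∧ p ∈ Icc lA lB ∧ q ∈ Icc lA lB ∧ f '' Icc u v = Icc p q ∧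
      m * (v - u) ≤ q - p ∧ q - p ≤ K * (v - u) := by
  have hsubT : Icc u v ⊆ Icc lA lB := Icc_subset_Icc hu.1 hv.2
  have hc : ContinuousOn f (Icc u v) := hcont.mono hsubT
  obtain ⟨a, ha, hmin⟩ := isCompact_Icc.exists_isMinOn (nonempty_Icc.2 huv) hc
  obtain ⟨b, hb, hmax⟩ := isCompact_Icc.exists_isMaxOn (nonempty_Icc.2 huv) hc
  have hpq : f a ≤ f b := hmin hb
  refine ⟨f a, f b, hpq, hmap a (hsubT ha), hmap b (hsubT hb), ?_, ?_, ?_⟩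
  · apply Subset.antisymm
    · rintro y ⟨x, hx, rfl⟩
      exact ⟨hmin hx, hmax hx⟩
    · have h1 : Icc (f a) (f b) ⊆ f '' uIcc a b := by
        rw [← uIcc_of_le hpq]
        exact intermediate_value_uIcc (hc.mono (uIcc_subset_Icc ha hb))
      refine h1.trans (image_mono (uIcc_subset_Icc ha hb))
  · have h1 : |f v - f u| ≤ f b - f a := by
      have hfu : f u ∈ Icc (f a) (f b) := ⟨hmin (left_mem_Icc.2 huv), hmax (left_mem_Icc.2 huv)⟩
      have hfv : f v ∈ Icc (f a) (f b) := ⟨hmin (right_mem_Icc.2 huv), hmax (right_mem_Icc.2 huv)⟩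
      rw [abs_sub_le_iff]
      constructor <;> linarith [hfu.1, hfu.2, hfv.1, hfv.2]
    have h2 := (hbd v hv u hu).1
    rw [abs_of_nonneg (by linarith : (0:ℝ) ≤ v - u)] at h2
    linarith
  · have h1 : f b - f a ≤ |f b - f a| := le_abs_self _
    have h2 := (hbd b (hsubT hb) a (hsubT ha)).2
    have h3 : |b - a| ≤ v - u := by
      rw [abs_sub_le_iff]; constructor <;> linarith [ha.1, ha.2, hb.1, hb.2]
    have h4 : K * |b - a| ≤ K * (v - u) := mul_le_mul_of_nonneg_left h3 hK
    linarith

lemma compBranch_image {k : ℕ} (φ : Fin k → ℝ → ℝ) {lA lB : ℝ} (m K : Fin k → ℝ)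
    (hm : ∀ i, 0 ≤ m i) (hK : ∀ i, 0 ≤ K i)
    (hmap : ∀ i, ∀ x ∈ Icc lA lB, φ i x ∈ Icc lA lB)
    (hcont : ∀ i, ContinuousOn (φ i) (Icc lA lB))
    (hbd : ∀ i, ∀ x ∈ Icc lA lB, ∀ y ∈ Icc lA lB,
      m i * |x - y| ≤ |φ i x - φ i y| ∧ |φ i x - φ i y| ≤ K i * |x - y|) :
    ∀ (w : List (Fin k)) (u v : ℝ), u ∈ Icc lA lB → v ∈ Icc lA lB → u ≤ v →
      ∃ p q, p ≤ q ∧ p ∈ Icc lA lB ∧ q ∈ Icc lA lB ∧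
        compBranch φ w '' Icc u v = Icc p q ∧
        (w.map m).prod * (v - u) ≤ q - p ∧ q - p ≤ (w.map K).prod * (v - u) := by
  intro w
  induction w with
  | nil =>
    intro u v hu hv huv
    exact ⟨u, v, huv, hu, hv, by simp [compBranch], by simp, by simp⟩
  | cons i w ih =>
    intro u v hu hv huv
    obtain ⟨p, q, hpq, hp, hq, himg, hlo, hhi⟩ := ih u v hu hv huv
    obtain ⟨p', q', hpq', hp', hq', himg', hlo', hhi'⟩ :=
      image_Icc_of_biLip (hK i) (hmap i) (hcont i) (hbd i) hp hq hpq
    refine ⟨p', q', hpq', hp', hq', ?_, ?_, ?_⟩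
    · rw [show compBranch φ (i :: w) = φ i ∘ compBranch φ w from rfl,
        Set.image_comp, himg, himg']
    · calc ((i :: w).map m).prod * (v - u) = m i * ((w.map m).prod * (v - u)) := by
            rw [List.map_cons, List.prod_cons]; ring
        _ ≤ m i * (q - p) := mul_le_mul_of_nonneg_left hlo (hm i)
        _ ≤ q' - p' := hlo'
    · calc q' - p' ≤ K i * (q - p) := hhi'
        _ ≤ K i * ((w.map K).prod * (v - u)) := mul_le_mul_of_nonneg_left hhi (hK i)
        _ = ((i :: w).map K).prod * (v - u) := by rw [List.map_cons, List.prod_cons]; ring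

lemma mvt' (ci di : ℝ) (S S' : ℝ → ℝ)
    (hD : ∀ x ∈ Icc ci di, HasDerivAt S (S' x) x) :
    ∀ a b : ℝ, a ∈ Icc ci di → b ∈ Icc ci di → a < b →
      ∃ ξ ∈ Icc ci di, S' ξ * (b - a) = S b - S a := by
  intro a b ha hb hab
  have hsub' : Icc a b ⊆ Icc ci di := Icc_subset_Icc ha.1 hb.2
  have hcont : ContinuousOn S (Icc a b) := fun x hx =>
    (hD x (hsub' hx)).continuousAt.continuousWithinAt
  obtain ⟨ξ, hξ, he⟩ := exists_hasDerivAt_eq_slope S S' hab hcont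
    (fun x hx => hD x (hsub' (Ioo_subset_Icc_self hx)))
  exact ⟨ξ, hsub' (Ioo_subset_Icc_self hξ),
    by rw [he, div_mul_cancel₀ _ (by linarith : b - a ≠ 0)]⟩

lemma pinch (lA lB : ℝ) (hL : lA < lB) (ci di : ℝ) (hcd : ci < di)
    (sl : ℝ) (hslope : |sl| * (di - ci) = lB - lA)
    (ε : ℝ)
    (S S' : ℝ → ℝ)
    (hD : ∀ x ∈ Icc ci di, HasDerivAt S (S' x) x)
    (hgt1 : ∀ x ∈ Icc ci di, 1 < |S' x|)
    (hSsurj : S '' Icc ci di = Icc lA lB)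
    (hN : ∀ x ∈ Icc ci di, ∀ y ∈ Icc ci di, Real.log (|S' x| / |S' y|) < ε) :
    ∀ x ∈ Icc ci di, Real.exp (-ε) * |sl| ≤ |S' x| ∧ |S' x| ≤ Real.exp ε * |sl| := by
  have hdc : (0:ℝ) < di - ci := by linarith
  have hslpos : 0 < |sl| := by nlinarith [abs_nonneg sl]
  obtain ⟨ξ1, hξ1, he1⟩ := mvt' ci di S S' hD ci di ⟨le_refl _, hcd.le⟩ ⟨hcd.le, le_refl _⟩ hcd
  have hSc : S ci ∈ Icc lA lB := by
    rw [← hSsurj]; exact mem_image_of_mem S ⟨le_refl _, hcd.le⟩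
  have hSd : S di ∈ Icc lA lB := by
    rw [← hSsurj]; exact mem_image_of_mem S ⟨hcd.le, le_refl _⟩
  have hup : |S' ξ1| ≤ |sl| := by
    have h1 : |S' ξ1| * (di - ci) = |S di - S ci| := by
      rw [← he1, abs_mul, abs_of_pos hdc]
    have h2 : |S di - S ci| ≤ lB - lA := by
      rw [abs_sub_le_iff]
      constructor <;> linarith [hSc.1, hSc.2, hSd.1, hSd.2]
    nlinarith
  obtain ⟨x0, hx0, hx0e⟩ : lA ∈ S '' Icc ci di := by
    rw [hSsurj]; exact ⟨le_refl _, hL.le⟩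
  obtain ⟨x1, hx1, hx1e⟩ : lB ∈ S '' Icc ci di := by
    rw [hSsurj]; exact ⟨hL.le, le_refl _⟩
  have hx01 : x0 ≠ x1 := fun h => by rw [h, hx1e] at hx0e; linarith
  have hlow : ∃ ξ0 ∈ Icc ci di, |sl| ≤ |S' ξ0| := by
    have hd01 : |x1 - x0| ≤ di - ci := by
      rw [abs_sub_le_iff]
      constructor <;> linarith [hx0.1, hx0.2, hx1.1, hx1.2]
    rcases lt_or_gt_of_ne hx01 with h | h
    · obtain ⟨ξ0, hξ0, he0⟩ := mvt' ci di S S' hD x0 x1 hx0 hx1 h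
      refine ⟨ξ0, hξ0, ?_⟩
      have h1 : |S' ξ0| * |x1 - x0| = lB - lA := by
        rw [← abs_mul, he0, hx1e, hx0e, abs_of_pos (by linarith)]
      nlinarith [abs_nonneg (S' ξ0), abs_nonneg (x1 - x0)]
    · obtain ⟨ξ0, hξ0, he0⟩ := mvt' ci di S S' hD x1 x0 hx1 hx0 h
      refine ⟨ξ0, hξ0, ?_⟩
      have h1 : |S' ξ0| * |x0 - x1| = lB - lA := by
        rw [← abs_mul, he0, hx1e, hx0e, abs_of_neg (by linarith : lA - lB < 0)]
        ring
      have h1' : |S' ξ0| * |x1 - x0| = lB - lA := by rwa [abs_sub_comm x1 x0]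
      nlinarith [abs_nonneg (S' ξ0), abs_nonneg (x1 - x0)]
  intro x hx
  have hxpos : (0:ℝ) < |S' x| := lt_trans one_pos (hgt1 x hx)
  constructor
  · obtain ⟨ξ0, hξ0, h0⟩ := hlow
    have hξpos : (0:ℝ) < |S' ξ0| := lt_trans one_pos (hgt1 ξ0 hξ0)
    have hr := hN ξ0 hξ0 x hx
    rw [Real.log_lt_iff_lt_exp (div_pos hξpos hxpos), div_lt_iff₀ hxpos] at hr
    rw [Real.exp_neg, inv_mul_le_iff₀ (Real.exp_pos ε)]
    linarith
  · have hξpos : (0:ℝ) < |S' ξ1| := lt_trans one_pos (hgt1 ξ1 hξ1)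
    have hr := hN x hx ξ1 hξ1
    rw [Real.log_lt_iff_lt_exp (div_pos hxpos hξpos), div_lt_iff₀ hξpos] at hr
    nlinarith [Real.exp_pos ε]

lemma disp (lA lB ci di sl ε : ℝ) (hslpos : 0 < |sl|)
    (S S' φ : ℝ → ℝ)
    (hD : ∀ x ∈ Icc ci di, HasDerivAt S (S' x) x)
    (hpinch : ∀ x ∈ Icc ci di, Real.exp (-ε) * |sl| ≤ |S' x| ∧ |S' x| ≤ Real.exp ε * |sl|)
    (hφ : ∀ x ∈ Icc lA lB, φ x ∈ Icc ci di ∧ S (φ x) = x) :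
    ∀ x ∈ Icc lA lB, ∀ y ∈ Icc lA lB,
      Real.exp (-ε) / |sl| * |x - y| ≤ |φ x - φ y| ∧
      |φ x - φ y| ≤ Real.exp ε / |sl| * |x - y| := by
  have hE : (0:ℝ) < Real.exp ε := Real.exp_pos ε
  have key : ∀ x ∈ Icc lA lB, ∀ y ∈ Icc lA lB, φ x < φ y →
      Real.exp (-ε) / |sl| * |x - y| ≤ |φ x - φ y| ∧
      |φ x - φ y| ≤ Real.exp ε / |sl| * |x - y| := by
    intro x hx y hy hlt
    obtain ⟨hφx, hSx⟩ := hφ x hx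
    obtain ⟨hφy, hSy⟩ := hφ y hy
    obtain ⟨ξ, hξ, he⟩ := mvt' ci di S S' hD (φ x) (φ y) hφx hφy hlt
    rw [hSy, hSx] at he
    have habs : |S' ξ| * |φ x - φ y| = |x - y| := by
      rw [← abs_mul, show S' ξ * (φ x - φ y) = -(S' ξ * (φ y - φ x)) by ring,
        abs_neg, he, abs_sub_comm]
    obtain ⟨hlo, hhi⟩ := hpinch ξ hξ
    constructor
    · have h1 : |x - y| ≤ Real.exp ε * |sl| * |φ x - φ y| := by
        rw [← habs]; exact mul_le_mul_of_nonneg_right hhi (abs_nonneg _)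
      rw [Real.exp_neg, div_eq_mul_inv, ← mul_inv, inv_mul_le_iff₀ (by positivity)]
      exact h1
    · have h2 : Real.exp (-ε) * |sl| * |φ x - φ y| ≤ |x - y| := by
        rw [← habs]; exact mul_le_mul_of_nonneg_right hlo (abs_nonneg _)
      have hEE : Real.exp ε * Real.exp (-ε) = 1 := by rw [← Real.exp_add]; simp
      rw [div_mul_eq_mul_div, le_div_iff₀ hslpos]
      calc |φ x - φ y| * |sl| = Real.exp ε * (Real.exp (-ε) * |sl| * |φ x - φ y|) := by
            rw [show Real.exp ε * (Real.exp (-ε) * |sl| * |φ x - φ y|) =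
              (Real.exp ε * Real.exp (-ε)) * (|sl| * |φ x - φ y|) by ring, hEE]; ring
        _ ≤ Real.exp ε * |x - y| := mul_le_mul_of_nonneg_left h2 hE.le
  intro x hx y hy
  rcases lt_trichotomy (φ x) (φ y) with h | h | h
  · exact key x hx y hy h
  · have hxy : x = y := by rw [← (hφ x hx).2, ← (hφ y hy).2, h]
    subst hxy
    simp
  · obtain ⟨h1, h2⟩ := key y hy x hx h
    rw [abs_sub_comm x y, abs_sub_comm (φ x) (φ y)]
    exact ⟨h1, h2⟩

lemma prod_map_div_const {k : ℕ} (w : List (Fin k)) (e : ℝ) (s : Fin k → ℝ) :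
    (w.map fun i => e / s i).prod = e ^ w.length * (w.map fun i => (s i)⁻¹).prod := by
  induction w with
  | nil => simp
  | cons i w ih =>
    rw [List.map_cons, List.prod_cons, ih, List.map_cons, List.prod_cons,
      List.length_cons, pow_succ]
    ring

end Helpers

/-- Hölder `C¹`-closeness of gaps (Remark 2): given `M, α, c > 0` and `l ∈ ℕ`, there is
`ε > 0` such that for every `S ∈ 𝒜(M,ε,α)` and the affine `R ∈ 𝒮¹(I₁,…,I_k,L)` with
`R'·S' > 0`, the gaps of level `r ≤ l` satisfy
`exp(-c)·|J^R_j(i₁,…,i_r)| ≤ |J^S_j(i₁,…,i_r)| ≤ exp(c)·|J^R_j(i₁,…,i_r)|`. -/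
theorem holder_c1_closeness_of_gaps
    (k : ℕ) (hk : 2 ≤ k) (lA lB : ℝ) (hL : lA < lB)
    (c d : Fin k → ℝ) (hcd : ∀ j, c j < d j)
    (hsub : ∀ j, Set.Icc (c j) (d j) ⊆ Set.Icc lA lB)
    (horder : ∀ (j : ℕ) (hj : j + 1 < k),
      d ⟨j, Nat.lt_of_succ_lt hj⟩ < c ⟨j + 1, hj⟩)
    (M α cc : ℝ) (hM : 0 < M) (hα : 0 < α) (hcc : 0 < cc) (l : ℕ)
    (R : ℝ → ℝ) (slope inter : Fin k → ℝ)
    (haff : ∀ j : Fin k, ∀ x ∈ Set.Icc (c j) (d j), R x = slope j * x + inter j)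
    (hRsurj : ∀ j, R '' Set.Icc (c j) (d j) = Set.Icc lA lB)
    (φR : Fin k → ℝ → ℝ)
    (hφR : ∀ i, ∀ x ∈ Set.Icc lA lB, φR i x ∈ Set.Icc (c i) (d i) ∧ R (φR i x) = x) :
    ∃ ε > 0, ∀ S S' : ℝ → ℝ, ∀ φS : Fin k → ℝ → ℝ,
      (∀ x ∈ ⋃ j, Set.Icc (c j) (d j), HasDerivAt S (S' x) x) →
      (∀ x ∈ ⋃ j, Set.Icc (c j) (d j), 1 < |S' x|) →
      (∀ j, S '' Set.Icc (c j) (d j) = Set.Icc lA lB) →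
      -- nonlinearity `N(S) < ε`
      (∀ j : Fin k, ∀ x ∈ Set.Icc (c j) (d j), ∀ y ∈ Set.Icc (c j) (d j),
        Real.log (|S' x| / |S' y|) < ε) →
      -- Hölder control of `log |S'|` with constant `M` and exponent `α`
      (∀ j : Fin k, ∀ x ∈ Set.Icc (c j) (d j), ∀ y ∈ Set.Icc (c j) (d j),
        abs (Real.log |S' x| - Real.log |S' y|) ≤ M * |x - y| ^ α) →
      -- `R'(x) S'(x) > 0` on `∪ I_j`
      (∀ j : Fin k, ∀ x ∈ Set.Icc (c j) (d j), 0 < slope j * S' x) →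
      (∀ i, ∀ x ∈ Set.Icc lA lB, φS i x ∈ Set.Icc (c i) (d i) ∧ S (φS i x) = x) →
      ∀ (j : ℕ) (hj : j + 1 < k), ∀ w : List (Fin k), w.length ≤ l →
        Real.exp (-cc) * (volume (compBranch φR w ''
            Set.Icc (d ⟨j, Nat.lt_of_succ_lt hj⟩) (c ⟨j + 1, hj⟩))).toReal ≤
          (volume (compBranch φS w ''
            Set.Icc (d ⟨j, Nat.lt_of_succ_lt hj⟩) (c ⟨j + 1, hj⟩))).toReal ∧
        (volume (compBranch φS w ''
            Set.Icc (d ⟨j, Nat.lt_of_succ_lt hj⟩) (c ⟨j + 1, hj⟩))).toReal ≤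
          Real.exp cc * (volume (compBranch φR w ''
            Set.Icc (d ⟨j, Nat.lt_of_succ_lt hj⟩) (c ⟨j + 1, hj⟩))).toReal := by
  -- slope facts
  have hslope : ∀ i : Fin k, |slope i| * (d i - c i) = lB - lA := by
    intro i
    have hci : c i ∈ Icc (c i) (d i) := ⟨le_refl _, (hcd i).le⟩
    have hdi : d i ∈ Icc (c i) (d i) := ⟨(hcd i).le, le_refl _⟩
    have hRc : R (c i) ∈ Icc lA lB := by rw [← hRsurj i]; exact mem_image_of_mem R hci
    have hRd : R (d i) ∈ Icc lA lB := by rw [← hRsurj i]; exact mem_image_of_mem R hdi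
    have h1 : |slope i| * (d i - c i) ≤ lB - lA := by
      have he : R (d i) - R (c i) = slope i * (d i - c i) := by
        rw [haff i _ hdi, haff i _ hci]; ring
      have h2 : |R (d i) - R (c i)| ≤ lB - lA := by
        rw [abs_sub_le_iff]; constructor <;> linarith [hRc.1, hRc.2, hRd.1, hRd.2]
      rw [he, abs_mul, abs_of_nonneg (by linarith [hcd i] : (0:ℝ) ≤ d i - c i)] at h2
      exact h2
    have h2 : lB - lA ≤ |slope i| * (d i - c i) := by
      obtain ⟨x0, hx0, hx0e⟩ : lA ∈ R '' Icc (c i) (d i) := by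
        rw [hRsurj i]; exact ⟨le_refl _, hL.le⟩
      obtain ⟨x1, hx1, hx1e⟩ : lB ∈ R '' Icc (c i) (d i) := by
        rw [hRsurj i]; exact ⟨hL.le, le_refl _⟩
      have h3 : lB - lA = slope i * (x1 - x0) := by
        rw [← hx1e, ← hx0e, haff i _ hx1, haff i _ hx0]; ring
      have h4 : |x1 - x0| ≤ d i - c i := by
        rw [abs_sub_le_iff]; constructor <;> linarith [hx0.1, hx0.2, hx1.1, hx1.2]
      calc lB - lA = |lB - lA| := (abs_of_nonneg (by linarith)).symm
        _ = |slope i| * |x1 - x0| := by rw [h3, abs_mul]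
        _ ≤ |slope i| * (d i - c i) := mul_le_mul_of_nonneg_left h4 (abs_nonneg _)
    linarith
  have hslpos : ∀ i, (0:ℝ) < |slope i| := by
    intro i
    nlinarith [hslope i, hcd i, abs_nonneg (slope i)]
  -- displacement of the affine inverse branches
  have hRdisp : ∀ i, ∀ x ∈ Icc lA lB, ∀ y ∈ Icc lA lB,
      |φR i x - φR i y| = |slope i|⁻¹ * |x - y| := by
    intro i x hx y hy
    obtain ⟨hmx, hex⟩ := hφR i x hx
    obtain ⟨hmy, hey⟩ := hφR i y hy
    have e1 : x = slope i * φR i x + inter i := by rw [← haff i _ hmx, hex]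
    have e2 : y = slope i * φR i y + inter i := by rw [← haff i _ hmy, hey]
    have he : x - y = slope i * (φR i x - φR i y) := by linear_combination e1 - e2
    have h2 : |x - y| = |slope i| * |φR i x - φR i y| := by rw [he, abs_mul]
    rw [h2, inv_mul_cancel_left₀ (hslpos i).ne']
  -- choose ε
  refine ⟨cc / (l + 1), by positivity, ?_⟩
  intro S S' φS hderiv hgt1 hSsurj hN _hHolder _hsign hφS j hj w hw
  set ε := cc / (l + 1) with hεdef
  have hεpos : 0 < ε := by positivity
  -- derivative and lower bound restricted to each interval
  have hD : ∀ i : Fin k, ∀ x ∈ Icc (c i) (d i), HasDerivAt S (S' x) x :=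
    fun i x hx => hderiv x (mem_iUnion.2 ⟨i, hx⟩)
  have hG : ∀ i : Fin k, ∀ x ∈ Icc (c i) (d i), 1 < |S' x| :=
    fun i x hx => hgt1 x (mem_iUnion.2 ⟨i, hx⟩)
  have hpinch : ∀ i : Fin k, ∀ x ∈ Icc (c i) (d i),
      Real.exp (-ε) * |slope i| ≤ |S' x| ∧ |S' x| ≤ Real.exp ε * |slope i| :=
    fun i => pinch lA lB hL (c i) (d i) (hcd i) (slope i) (hslope i) ε S S'
      (hD i) (hG i) (hSsurj i) (hN i)
  have hSdisp : ∀ i : Fin k, ∀ x ∈ Icc lA lB, ∀ y ∈ Icc lA lB,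
      Real.exp (-ε) / |slope i| * |x - y| ≤ |φS i x - φS i y| ∧
      |φS i x - φS i y| ≤ Real.exp ε / |slope i| * |x - y| :=
    fun i => disp lA lB (c i) (d i) (slope i) ε (hslpos i) S S' (φS i)
      (hD i) (hpinch i) (hφS i)
  -- endpoints of the gap
  set u : ℝ := d ⟨j, Nat.lt_of_succ_lt hj⟩ with hu_def
  set v : ℝ := c ⟨j + 1, hj⟩ with hv_def
  have huT : u ∈ Icc lA lB := hsub ⟨j, Nat.lt_of_succ_lt hj⟩ ⟨(hcd _).le, le_refl _⟩
  have hvT : v ∈ Icc lA lB := hsub ⟨j + 1, hj⟩ ⟨le_refl _, (hcd _).le⟩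
  have huv : u ≤ v := (horder j hj).le
  -- interval images for S
  obtain ⟨pS, qS, hpqS, _, _, himgS, hloS, hhiS⟩ :=
    compBranch_image φS (fun i => Real.exp (-ε) / |slope i|)
      (fun i => Real.exp ε / |slope i|)
      (fun i => by positivity) (fun i => by positivity)
      (fun i x hx => hsub i (hφS i x hx).1)
      (fun i => contOn_of_bound (fun x hx y hy => (hSdisp i x hx y hy).2))
      (fun i x hx y hy => hSdisp i x hx y hy)
      w u v huT hvT huv
  -- interval images for R
  obtain ⟨pR, qR, hpqR, _, _, himgR, hloR, hhiR⟩ :=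
    compBranch_image φR (fun i => |slope i|⁻¹) (fun i => |slope i|⁻¹)
      (fun i => by positivity) (fun i => by positivity)
      (fun i x hx => hsub i (hφR i x hx).1)
      (fun i => contOn_of_bound (fun x hx y hy => (hRdisp i x hx y hy).le))
      (fun i x hx y hy => ⟨(hRdisp i x hx y hy).ge, (hRdisp i x hx y hy).le⟩)
      w u v huT hvT huv
  -- abbreviations
  set P : ℝ := (w.map fun i => |slope i|⁻¹).prod with hPdef
  have hPpos : 0 < P := by
    apply List.prod_pos
    intro x hx
    obtain ⟨i, _, rfl⟩ := List.mem_map.1 hx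
    exact inv_pos.2 (hslpos i)
  have hRexact : qR - pR = P * (v - u) := le_antisymm hhiR hloR
  have hprodS_lo : ((w.map fun i => Real.exp (-ε) / |slope i|).prod : ℝ)
      = Real.exp (-(w.length * ε)) * P := by
    rw [prod_map_div_const, ← Real.exp_nat_mul,
      show (w.length : ℝ) * -ε = -(w.length * ε) by ring]
  have hprodS_hi : ((w.map fun i => Real.exp ε / |slope i|).prod : ℝ)
      = Real.exp (w.length * ε) * P := by
    rw [prod_map_div_const, ← Real.exp_nat_mul]
  have hrε : (w.length : ℝ) * ε ≤ cc := by
    have h1 : (w.length : ℝ) ≤ l := Nat.cast_le.2 hw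
    rw [hεdef, show (w.length:ℝ) * (cc / (↑l + 1)) = (w.length * cc) / (↑l + 1) by ring,
      div_le_iff₀ (by positivity : (0:ℝ) < (l:ℝ) + 1)]
    nlinarith
  have hvu : (0:ℝ) ≤ v - u := by linarith
  -- convert volumes
  rw [himgS, himgR, Real.volume_Icc, Real.volume_Icc,
    ENNReal.toReal_ofReal (by linarith : (0:ℝ) ≤ qS - pS),
    ENNReal.toReal_ofReal (by linarith : (0:ℝ) ≤ qR - pR), hRexact]
  constructor
  · have h1 : Real.exp (-cc) * (P * (v - u)) ≤ Real.exp (-(w.length * ε)) * (P * (v - u)) := by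
      apply mul_le_mul_of_nonneg_right _ (by positivity)
      exact Real.exp_le_exp.2 (by linarith)
    calc Real.exp (-cc) * (P * (v - u)) ≤ Real.exp (-(w.length * ε)) * (P * (v - u)) := h1
      _ = (w.map fun i => Real.exp (-ε) / |slope i|).prod * (v - u) := by
        rw [hprodS_lo]; ring
      _ ≤ qS - pS := hloS
  · calc qS - pS ≤ (w.map fun i => Real.exp ε / |slope i|).prod * (v - u) := hhiS
      _ = Real.exp (w.length * ε) * (P * (v - u)) := by rw [hprodS_hi]; ring
      _ ≤ Real.exp cc * (P * (v - u)) := by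
        apply mul_le_mul_of_nonneg_right _ (by positivity)
        exact Real.exp_le_exp.2 (by linarith)
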